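/- Let A be a (not necessarily self-adjoint) operator whose principal eigenvalue λ₁(ε) for the problem -dΔψ + ηψ - (K+ε)Bψ = λψ with Neumann boundary conditions exists for each ε ≥ 0 with positive eigenfunction. Then the map ε ↦ λ₁(ε) is monotone nonincreasing: if 0 ≤ ε₁ < ε₂ then λ₁(ε₂) ≤ λ₁(ε₁). -/

import Mathlib

open MeasureTheory RealInnerProductSpace

/-- Monotonicity of the principal eigenvalue in `ε` for the (non-selfadjoint) Neumann
problem `-dΔψ + ηψ - (K+ε)Bψ = λψ`.  The elliptic Neumann operator `-dΔ + η` is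
represented by the linear map `A₀` on `L²(Ω)`, multiplication by `K` by `MK`, and the
adjoint problem by the family `S ε`, adjoint to `T ε := A₀ - MK∘B - ε B` with respect to
the `L²` inner product.  If for every `ε ≥ 0` both the problem and its adjoint admit
a.e.-positive eigenfunctions with eigenvalue `λ₁(ε)`, and `B` is positivity preserving,
then `ε ↦ λ₁(ε)` is nonincreasing: `0 ≤ ε₁ < ε₂` implies `λ₁(ε₂) ≤ λ₁(ε₁)`. -/

private lemma inner_nonneg_aux {α : Type*} [MeasurableSpace α] {μ : Measure α}
    (f g : Lp ℝ 2 μ) (hf : ∀ᵐ x ∂μ, 0 ≤ f x) (hg : ∀ᵐ x ∂μ, 0 ≤ g x) :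
    0 ≤ ⟪f, g⟫ := by
  rw [MeasureTheory.L2.inner_def]
  refine integral_nonneg_of_ae ?_
  filter_upwards [hf, hg] with x hfx hgx
  simpa [RCLike.inner_apply] using mul_nonneg hgx hfx

private lemma inner_pos_aux {α : Type*} [MeasurableSpace α] {μ : Measure α} (hμ : μ ≠ 0)
    (f g : Lp ℝ 2 μ) (hf : ∀ᵐ x ∂μ, 0 < f x) (hg : ∀ᵐ x ∂μ, 0 < g x) :
    0 < ⟪f, g⟫ := by
  have hint : Integrable (fun x => f x * g x) μ := by
    simpa [RCLike.inner_apply, mul_comm] using MeasureTheory.L2.integrable_inner (𝕜 := ℝ) f g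
  have hpos : ∀ᵐ x ∂μ, 0 < f x * g x := by
    filter_upwards [hf, hg] with x hfx hgx using mul_pos hfx hgx
  have hnn : 0 ≤ᵐ[μ] fun x => f x * g x := hpos.mono fun x hx => hx.le
  have h : ⟪f, g⟫ = ∫ x, f x * g x ∂μ := by
    rw [MeasureTheory.L2.inner_def]; simp [RCLike.inner_apply, mul_comm]
  rw [h, integral_pos_iff_support_of_nonneg_ae hnn hint]
  by_contra hcon
  push_neg at hcon
  have hsupp : μ (Function.support fun x => f x * g x) = 0 :=
    le_antisymm hcon zero_le
  have hcompl : μ ((Function.support fun x => f x * g x)ᶜ) = 0 := by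
    rw [ae_iff] at hpos
    refine measure_mono_null ?_ hpos
    intro x hx
    simp only [Function.mem_support, Set.mem_compl_iff, not_not] at hx
    simp [hx]
  have huniv : μ Set.univ = 0 := by
    have := measure_union_le (μ := μ) (Function.support fun x => f x * g x)
      ((Function.support fun x => f x * g x)ᶜ)
    rw [Set.union_compl_self, hsupp, hcompl] at this
    simpa using this
  exact hμ (Measure.measure_univ_eq_zero.mp huniv)

theorem principal_eigenvalue_antitone
    {α : Type*} [MeasurableSpace α] (μ : Measure α) (hμ : μ ≠ 0)
    (A₀ : Lp ℝ 2 μ →ₗ[ℝ] Lp ℝ 2 μ)          -- the Neumann realization of `-dΔ + η`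
    (MK B : Lp ℝ 2 μ →L[ℝ] Lp ℝ 2 μ)         -- multiplication by `K`, and the operator `B`
    (hBpos : ∀ f : Lp ℝ 2 μ, (∀ᵐ x ∂μ, 0 ≤ f x) → ∀ᵐ x ∂μ, 0 ≤ B f x)
    (T S : ℝ → (Lp ℝ 2 μ →ₗ[ℝ] Lp ℝ 2 μ))
    (hT : ∀ ε u, T ε u = A₀ u - MK (B u) - ε • B u)
    (hadj : ∀ ε u v, ⟪T ε u, v⟫ = ⟪u, S ε v⟫)  -- `S ε` is the adjoint problem operator
    (lam1 : ℝ → ℝ) (ψ ψt : ℝ → Lp ℝ 2 μ)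
    (heig : ∀ ε, 0 ≤ ε → (∀ᵐ x ∂μ, 0 < ψ ε x) ∧ T ε (ψ ε) = lam1 ε • ψ ε)
    (heigadj : ∀ ε, 0 ≤ ε → (∀ᵐ x ∂μ, 0 < ψt ε x) ∧ S ε (ψt ε) = lam1 ε • ψt ε) :
    ∀ ε₁ ε₂ : ℝ, 0 ≤ ε₁ → ε₁ < ε₂ → lam1 ε₂ ≤ lam1 ε₁ := by
  intro e1 e2 he1 hlt
  obtain ⟨hψ2pos, hψ2eig⟩ := heig e2 (le_of_lt (lt_of_le_of_lt he1 hlt))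
  obtain ⟨hψt1pos, hψt1eig⟩ := heigadj e1 he1
  set u := ψ e2
  set v := ψt e1
  -- key identity
  have hTrel : T e1 u = lam1 e2 • u + (e2 - e1) • B u := by
    have h1 := hT e1 u
    have h2 := hT e2 u
    have : T e1 u = T e2 u + (e2 - e1) • B u := by
      rw [h1, h2]; module
    rw [this, hψ2eig]
  have hL : ⟪T e1 u, v⟫ = lam1 e1 * ⟪u, v⟫ := by
    rw [hadj e1 u v, hψt1eig, real_inner_smul_right]
  have hR : ⟪T e1 u, v⟫ = lam1 e2 * ⟪u, v⟫ + (e2 - e1) * ⟪B u, v⟫ := by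
    rw [hTrel, inner_add_left, real_inner_smul_left, real_inner_smul_left]
  have ha : 0 < ⟪u, v⟫ := inner_pos_aux hμ u v hψ2pos hψt1pos
  have hb : 0 ≤ ⟪B u, v⟫ :=
    inner_nonneg_aux (B u) v (hBpos u (hψ2pos.mono fun x hx => hx.le))
      (hψt1pos.mono fun x hx => hx.le)
  nlinarith [hL, hR, ha, hb, sub_pos.mpr hlt]
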